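/- For all real numbers s ≥ 2, we have log s + ψ(3) - ψ(s+3) > 0, where ψ is the digamma function. -/

import Mathlib

/-- The digamma function `ψ = Γ'/Γ`, as the derivative of `log ∘ Γ`. -/
noncomputable def digamma (x : ℝ) : ℝ := deriv (fun y : ℝ => Real.log (Real.Gamma y)) x

open Real Set

namespace DAux

noncomputable def L : ℝ → ℝ := fun y : ℝ => Real.log (Real.Gamma y)

lemma diffL {x : ℝ} (hx : 0 < x) : DifferentiableAt ℝ L x := by
  have h1 : DifferentiableAt ℝ Real.Gamma x :=
    Real.differentiableAt_Gamma (fun m => by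
      have : (0:ℝ) ≤ m := Nat.cast_nonneg m
      intro h; rw [h] at hx; linarith)
  exact h1.log (Real.Gamma_pos_of_pos hx).ne'

lemma hasDerivL {x : ℝ} (hx : 0 < x) : HasDerivAt L (digamma x) x :=
  (diffL hx).hasDerivAt

lemma digamma_add_one {x : ℝ} (hx : 0 < x) : digamma (x + 1) = digamma x + 1 / x := by
  have h1 : HasDerivAt (fun y : ℝ => L (y + 1)) (digamma (x + 1)) x := by
    have := (hasDerivL (by linarith : (0:ℝ) < x + 1)).comp x
      ((hasDerivAt_id x).add_const 1)
    simpa [Function.comp_def] using this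
  have h2 : HasDerivAt (fun y : ℝ => Real.log y + L y) (x⁻¹ + digamma x) x :=
    (Real.hasDerivAt_log hx.ne').add (hasDerivL hx)
  have heq : (fun y : ℝ => L (y + 1)) =ᶠ[nhds x] fun y : ℝ => Real.log y + L y := by
    filter_upwards [eventually_gt_nhds hx] with y hy
    have hg : Real.Gamma (y + 1) = y * Real.Gamma y := Real.Gamma_add_one hy.ne'
    simp only [L, hg]
    rw [Real.log_mul hy.ne' (Real.Gamma_pos_of_pos hy).ne']
  have h3 : HasDerivAt (fun y : ℝ => L (y + 1)) (x⁻¹ + digamma x) x :=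
    h2.congr_of_eventuallyEq heq
  have := h1.unique h3
  rw [this, one_div]; ring

lemma digamma_le_slope {a b : ℝ} (ha : 0 < a) (hab : a < b) :
    digamma a ≤ (L b - L a) / (b - a) := by
  have h := Real.convexOn_log_Gamma.deriv_le_slope (Set.mem_Ioi.2 ha)
    (Set.mem_Ioi.2 (ha.trans hab)) hab (diffL ha)
  rw [slope_def_field] at h
  exact h

lemma slope_le_digamma {a b : ℝ} (ha : 0 < a) (hab : a < b) :
    (L b - L a) / (b - a) ≤ digamma b := by
  have h := Real.convexOn_log_Gamma.slope_le_deriv (Set.mem_Ioi.2 ha)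
    (Set.mem_Ioi.2 (ha.trans hab)) hab (diffL (ha.trans hab))
  rw [slope_def_field] at h
  exact h

lemma tangent_le {c y : ℝ} (hc : 0 < c) (hy : 0 < y) :
    L c + (y - c) * digamma c ≤ L y := by
  rcases lt_trichotomy y c with h | h | h
  · have := slope_le_digamma hy h
    rw [div_le_iff₀ (by linarith)] at this
    nlinarith
  · simp [h]
  · have := digamma_le_slope hc h
    rw [le_div_iff₀ (by linarith)] at this
    nlinarith

lemma digamma_mono {a b : ℝ} (ha : 0 < a) (hab : a ≤ b) : digamma a ≤ digamma b := by
  rcases eq_or_lt_of_le hab with h | h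
  · rw [h]
  · exact (digamma_le_slope ha h).trans (slope_le_digamma ha h)

/-! ### Gamma values -/

lemma Gamma5 : Real.Gamma 5 = 24 := by
  rw [show (5:ℝ) = (4:ℕ) + 1 by norm_num, Real.Gamma_nat_eq_factorial]
  norm_num [Nat.factorial]

lemma Gamma6 : Real.Gamma 6 = 120 := by
  rw [show (6:ℝ) = (5:ℕ) + 1 by norm_num, Real.Gamma_nat_eq_factorial]
  norm_num [Nat.factorial]

lemma Gamma8 : Real.Gamma 8 = 5040 := by
  rw [show (8:ℝ) = (7:ℕ) + 1 by norm_num, Real.Gamma_nat_eq_factorial]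
  norm_num [Nat.factorial]

lemma Gamma_step {x : ℝ} (hx : x ≠ 0) : Real.Gamma (x + 1) = x * Real.Gamma x :=
  Real.Gamma_add_one hx

lemma Gamma11half : Real.Gamma (11/2) = (945/32) * Real.sqrt π := by
  have h12 : Real.Gamma (1/2) = Real.sqrt π := Real.Gamma_one_half_eq
  have h32 : Real.Gamma (3/2) = (1/2) * Real.sqrt π := by
    rw [show (3/2:ℝ) = 1/2 + 1 by norm_num, Gamma_step (by norm_num), h12]
  have h52 : Real.Gamma (5/2) = (3/4) * Real.sqrt π := by
    rw [show (5/2:ℝ) = 3/2 + 1 by norm_num, Gamma_step (by norm_num), h32]; ring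
  have h72 : Real.Gamma (7/2) = (15/8) * Real.sqrt π := by
    rw [show (7/2:ℝ) = 5/2 + 1 by norm_num, Gamma_step (by norm_num), h52]; ring
  have h92 : Real.Gamma (9/2) = (105/16) * Real.sqrt π := by
    rw [show (9/2:ℝ) = 7/2 + 1 by norm_num, Gamma_step (by norm_num), h72]; ring
  rw [show (11/2:ℝ) = 9/2 + 1 by norm_num, Gamma_step (by norm_num), h92]; ring

lemma Gamma15half : Real.Gamma (15/2) = (135135/128) * Real.sqrt π := by
  have h11 := Gamma11half
  have h13 : Real.Gamma (13/2) = (10395/64) * Real.sqrt π := by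
    rw [show (13/2:ℝ) = 11/2 + 1 by norm_num, Gamma_step (by norm_num), h11]; ring
  rw [show (15/2:ℝ) = 13/2 + 1 by norm_num, Gamma_step (by norm_num), h13]; ring

lemma sqrtpi_lt : Real.sqrt π < 1.7725 := by
  have h := Real.sq_sqrt Real.pi_pos.le
  have h2 := Real.sqrt_nonneg π
  nlinarith [Real.pi_lt_d6]

/-! ### numeric bounds on logarithms -/

lemma exp_div_lt {a b : ℕ} {q : ℝ} (hq : 0 < q) (ha : 0 < a) (hb : 0 < b)
    (h : (2.7182818286:ℝ) ^ a ≤ q ^ b) : Real.exp ((a:ℝ) / b) < q := by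
  have h1 : Real.exp ((a:ℝ) / b) ^ b = Real.exp a := by
    rw [← Real.exp_nat_mul]; congr 1; field_simp
  have h2 : Real.exp (a:ℝ) = Real.exp 1 ^ a := by
    rw [← Real.exp_nat_mul, mul_one]
  have h3 : Real.exp 1 ^ a < (2.7182818286:ℝ) ^ a :=
    pow_lt_pow_left₀ Real.exp_one_lt_d9 (Real.exp_pos 1).le ha.ne'
  have h4 : Real.exp ((a:ℝ) / b) ^ b < q ^ b := by
    rw [h1, h2]; exact h3.trans_le h
  exact lt_of_pow_lt_pow_left₀ b hq.le h4

lemma lt_exp_div {a b : ℕ} {q : ℝ} (ha : 0 < a) (hb : 0 < b)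
    (h : q ^ b ≤ (2.7182818283:ℝ) ^ a) : q < Real.exp ((a:ℝ) / b) := by
  have h1 : Real.exp ((a:ℝ) / b) ^ b = Real.exp a := by
    rw [← Real.exp_nat_mul]; congr 1; field_simp
  have h2 : Real.exp (a:ℝ) = Real.exp 1 ^ a := by
    rw [← Real.exp_nat_mul, mul_one]
  have h3 : (2.7182818283:ℝ) ^ a < Real.exp 1 ^ a :=
    pow_lt_pow_left₀ Real.exp_one_gt_d9 (by norm_num) ha.ne'
  have h4 : q ^ b < Real.exp ((a:ℝ) / b) ^ b := by
    rw [h1, h2]; exact h.trans_lt h3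
  exact lt_of_pow_lt_pow_left₀ b (Real.exp_pos _).le h4

lemma log5_lt : Real.log 5 < 1.61 := by
  rw [show (1.61:ℝ) = (161:ℕ)/(100:ℕ) by norm_num]
  rw [Real.log_lt_iff_lt_exp (by norm_num)]
  exact lt_exp_div (by norm_num) (by norm_num) (by norm_num)

lemma log94_gt : (0.81:ℝ) < Real.log (9/4) := by
  rw [show (0.81:ℝ) = (81:ℕ)/(100:ℕ) by norm_num]
  rw [Real.lt_log_iff_exp_lt (by norm_num)]
  exact exp_div_lt (by norm_num) (by norm_num) (by norm_num) (by norm_num)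

lemma log52_gt : (0.916:ℝ) < Real.log (5/2) := by
  rw [show (0.916:ℝ) = (229:ℕ)/(250:ℕ) by norm_num]
  rw [Real.lt_log_iff_exp_lt (by norm_num)]
  exact exp_div_lt (by norm_num) (by norm_num) (by norm_num) (by norm_num)

lemma logA_lt : Real.log (44667/20480) < 0.78 := by
  rw [show (0.78:ℝ) = (39:ℕ)/(50:ℕ) by norm_num]
  rw [Real.log_lt_iff_lt_exp (by norm_num)]
  exact lt_exp_div (by norm_num) (by norm_num) (by norm_num)

lemma logP_gt : (0.99:ℝ) < Real.log (2.6933) := by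
  rw [show (0.99:ℝ) = (99:ℕ)/(100:ℕ) by norm_num]
  rw [Real.lt_log_iff_exp_lt (by norm_num)]
  exact exp_div_lt (by norm_num) (by norm_num) (by norm_num) (by norm_num)

/-! ### digamma values -/

lemma psi4 : digamma 4 = digamma 3 + 1/3 := by
  have h := digamma_add_one (show (0:ℝ) < 3 by norm_num)
  norm_num at h
  exact h

lemma psi5 : digamma 5 = digamma 3 + 7/12 := by
  have h := digamma_add_one (show (0:ℝ) < 4 by norm_num)
  norm_num at h
  rw [h, psi4]; ring

lemma psi8 : digamma 8 = digamma 3 + 153/140 := by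
  have h5 := digamma_add_one (show (0:ℝ) < 5 by norm_num)
  have h6 := digamma_add_one (show (0:ℝ) < 6 by norm_num)
  have h7 := digamma_add_one (show (0:ℝ) < 7 by norm_num)
  norm_num at h5 h6 h7
  rw [h7, h6, h5, psi5]; ring

/-- key lower bound for `digamma 3` -/
lemma psi3_gt : (621/700:ℝ) < digamma 3 := by
  have hs := slope_le_digamma (show (0:ℝ) < 15/2 by norm_num)
    (show (15/2:ℝ) < 8 by norm_num)
  have hL8 : L 8 = Real.log 5040 := by rw [L, Gamma8]
  have hL15 : L (15/2) ≤ Real.log (19162143/10240) := by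
    rw [L, Gamma15half]
    apply Real.log_le_log (by positivity)
    nlinarith [sqrtpi_lt, Real.sqrt_nonneg π]
  have hdiff : Real.log (2.6933) ≤ L 8 - L (15/2) := by
    have hmul : Real.log (2.6933) + Real.log (19162143/10240) =
        Real.log (2.6933 * (19162143/10240)) :=
      (Real.log_mul (by norm_num) (by norm_num)).symm
    have h2 : Real.log ((2.6933:ℝ) * (19162143/10240)) ≤ Real.log 5040 := by
      apply Real.log_le_log (by norm_num)
      norm_num
    rw [hL8]; linarith
  rw [psi8] at hs
  have h8 : (8:ℝ) - 15/2 = 1/2 := by norm_num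
  rw [h8] at hs
  have : (L 8 - L (15/2)) / (1/2) = 2 * (L 8 - L (15/2)) := by ring
  rw [this] at hs
  nlinarith [logP_gt, hdiff]

/-- upper bound on the secant constant `A = L(11/2) - L 5` -/
lemma A_lt : L (11/2) - L 5 < 0.78 := by
  have hL5 : L 5 = Real.log 24 := by rw [L, Gamma5]
  have h1 : L (11/2) ≤ Real.log ((945/32) * 1.7725) := by
    rw [L, Gamma11half]
    apply Real.log_le_log (by positivity)
    nlinarith [sqrtpi_lt, Real.sqrt_nonneg π]
  have h2 : Real.log ((945/32) * 1.7725) - Real.log 24 = Real.log (44667/20480) := by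
    rw [← Real.log_div (by norm_num) (by norm_num)]
    norm_num
  have := logA_lt
  rw [hL5]
  linarith

lemma log_chord {x y a b : ℝ} (hx : 0 < x) (hy : 0 < y) (ha : 0 ≤ a) (hb : 0 ≤ b)
    (hab : a + b = 1) : a * Real.log x + b * Real.log y ≤ Real.log (a*x + b*y) := by
  have := strictConcaveOn_log_Ioi.concaveOn.2 (Set.mem_Ioi.2 hx) (Set.mem_Ioi.2 hy) ha hb hab
  simpa [smul_eq_mul] using this

/-! ### the three regimes on `[2,3]` -/

lemma case_a {s : ℝ} (h1 : 5/2 ≤ s) (h2 : s ≤ 3) :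
    Real.log s + digamma 3 - digamma (s + 3) > 0 := by
  have hs0 : (0:ℝ) < s := by linarith
  have e1 := digamma_add_one hs0
  have e2 := digamma_add_one (show (0:ℝ) < s + 1 by linarith)
  have e3 := digamma_add_one (show (0:ℝ) < s + 2 by linarith)
  have hrec : digamma (s + 3) = digamma s + 1/s + 1/(s+1) + 1/(s+2) := by
    rw [show s + 3 = (s + 2) + 1 by ring, e3, show s + 2 = (s + 1) + 1 by ring, e2,
      show s + 1 = s + 1 by ring, e1]
  have hmono : digamma s ≤ digamma 3 := digamma_mono hs0 h2
  have hlog : Real.log (5/2) ≤ Real.log s := Real.log_le_log (by norm_num) h1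
  have b1 : 1/s ≤ 2/5 := by rw [div_le_div_iff₀ (by linarith) (by norm_num)]; linarith
  have b2 : 1/(s+1) ≤ 2/7 := by rw [div_le_div_iff₀ (by linarith) (by norm_num)]; linarith
  have b3 : 1/(s+2) ≤ 2/9 := by rw [div_le_div_iff₀ (by linarith) (by norm_num)]; linarith
  have := log52_gt
  rw [hrec]
  linarith

lemma case_b {s : ℝ} (h1 : 2 ≤ s) (h2 : s ≤ 9/4) :
    Real.log s + digamma 3 - digamma (s + 3) > 0 := by
  have hs3 : (0:ℝ) < s + 3 := by linarith
  have hlt : s + 3 < 11/2 := by linarith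
  have hsec := digamma_le_slope hs3 hlt
  have htan := tangent_le (show (0:ℝ) < 5 by norm_num) hs3
  rw [psi5] at htan
  -- chord bound for log s on [2, 9/4]
  have hchord : (9 - 4*s) * Real.log 2 + (4*s - 8) * Real.log (9/4) ≤ Real.log s := by
    have h := log_chord (show (0:ℝ) < 2 by norm_num) (show (0:ℝ) < 9/4 by norm_num)
      (show (0:ℝ) ≤ 9 - 4*s by linarith) (show (0:ℝ) ≤ 4*s - 8 by linarith)
      (by ring)
    rwa [show (9 - 4*s) * 2 + (4*s - 8) * (9/4) = s by ring] at h
  have hl2 := Real.log_two_gt_d9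
  have h94 := log94_gt
  have hchord2 : (9 - 4*s) * 0.6931471803 + (4*s - 8) * 0.81 ≤ Real.log s := by
    have e1 : (9 - 4*s) * 0.6931471803 ≤ (9 - 4*s) * Real.log 2 :=
      mul_le_mul_of_nonneg_left hl2.le (by linarith)
    have e2 : (4*s - 8) * 0.81 ≤ (4*s - 8) * Real.log (9/4) :=
      mul_le_mul_of_nonneg_left h94.le (by linarith)
    linarith
  have hp := psi3_gt
  have hA := A_lt
  have key : (L (11/2) - L (s + 3)) / (11/2 - (s + 3)) < Real.log s + digamma 3 := by
    rw [div_lt_iff₀ (by linarith)]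
    have hprod : ((9 - 4*s) * 0.6931471803 + (4*s - 8) * 0.81) * (11/2 - (s+3))
        ≤ Real.log s * (11/2 - (s+3)) :=
      mul_le_mul_of_nonneg_right hchord2 (by linarith)
    nlinarith [htan, hA, hp, hprod, mul_nonneg (show (0:ℝ) ≤ s - 2 by linarith)
      (show (0:ℝ) ≤ 9/4 - s by linarith)]
  linarith [hsec.trans_lt key]

lemma case_c {s : ℝ} (h1 : 9/4 ≤ s) (h2 : s ≤ 5/2) :
    Real.log s + digamma 3 - digamma (s + 3) > 0 := by
  have hs3 : (0:ℝ) < s + 3 := by linarith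
  have hlt : s + 3 < 6 := by linarith
  have hsec := digamma_le_slope hs3 hlt
  have htan := tangent_le (show (0:ℝ) < 5 by norm_num) hs3
  rw [psi5] at htan
  have hL65 : L 6 - L 5 = Real.log 5 := by
    rw [L, L, Gamma6, Gamma5, show (120:ℝ) = 5 * 24 by norm_num,
      Real.log_mul (by norm_num) (by norm_num)]
    ring
  have hchord : (10 - 4*s) * Real.log (9/4) + (4*s - 9) * Real.log (5/2) ≤ Real.log s := by
    have h := log_chord (show (0:ℝ) < 9/4 by norm_num) (show (0:ℝ) < 5/2 by norm_num)
      (show (0:ℝ) ≤ 10 - 4*s by linarith) (show (0:ℝ) ≤ 4*s - 9 by linarith)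
      (by ring)
    rwa [show (10 - 4*s) * (9/4) + (4*s - 9) * (5/2) = s by ring] at h
  have h94 := log94_gt
  have h52 := log52_gt
  have hchord2 : (10 - 4*s) * 0.81 + (4*s - 9) * 0.916 ≤ Real.log s := by
    have e1 : (10 - 4*s) * 0.81 ≤ (10 - 4*s) * Real.log (9/4) :=
      mul_le_mul_of_nonneg_left h94.le (by linarith)
    have e2 : (4*s - 9) * 0.916 ≤ (4*s - 9) * Real.log (5/2) :=
      mul_le_mul_of_nonneg_left h52.le (by linarith)
    linarith
  have hp := psi3_gt
  have hl5 := log5_lt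
  have key : (L 6 - L (s + 3)) / (6 - (s + 3)) < Real.log s + digamma 3 := by
    rw [div_lt_iff₀ (by linarith)]
    have hprod : ((10 - 4*s) * 0.81 + (4*s - 9) * 0.916) * (6 - (s+3))
        ≤ Real.log s * (6 - (s+3)) :=
      mul_le_mul_of_nonneg_right hchord2 (by linarith)
    nlinarith [htan, hp, hprod, hL65, hl5, mul_nonneg (show (0:ℝ) ≤ s - 9/4 by linarith)
      (show (0:ℝ) ≤ 5/2 - s by linarith)]
  linarith [hsec.trans_lt key]

lemma core {s : ℝ} (h1 : 2 ≤ s) (h2 : s ≤ 3) :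
    Real.log s + digamma 3 - digamma (s + 3) > 0 := by
  rcases le_or_gt s (9/4) with h | h
  · exact case_b h1 h
  · rcases le_or_gt s (5/2) with h' | h'
    · exact case_c h.le h'
    · exact case_a h'.le h2

lemma aux (n : ℕ) : ∀ s : ℝ, 2 ≤ s → s ≤ 3 + n →
    Real.log s + digamma 3 - digamma (s + 3) > 0 := by
  induction n with
  | zero => intro s h1 h2; exact core h1 (by simpa using h2)
  | succ n ih =>
    intro s h1 h2
    rcases le_or_gt s (3 + n) with h | h
    · exact ih s h1 h
    · have hn : (0:ℝ) ≤ n := Nat.cast_nonneg n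
      have hs3 : 3 < s := by linarith
      have prev := ih (s - 1) (by linarith) (by push_cast at h2 ⊢; linarith)
      rw [show s - 1 + 3 = s + 2 by ring] at prev
      have hrec : digamma (s + 3) = digamma (s + 2) + 1/(s+2) := by
        rw [show s + 3 = (s + 2) + 1 by ring, digamma_add_one (by linarith)]
      have hlog : Real.log (s - 1) + 1/s ≤ Real.log s := by
        have hx : Real.log ((s-1)/s) ≤ (s-1)/s - 1 :=
          Real.log_le_sub_one_of_pos (div_pos (by linarith) (by linarith))
        have hd : Real.log ((s-1)/s) = Real.log (s-1) - Real.log s :=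
          Real.log_div (by linarith) (by linarith)
        have he : (s-1)/s - 1 = -(1/s) := by field_simp; ring
        rw [hd, he] at hx
        linarith
      have hfrac : 1/(s+2) < 1/s := by
        rw [div_lt_div_iff₀ (by linarith) (by linarith)]; linarith
      rw [hrec]
      linarith

end DAux

theorem stmt_8 (s : ℝ) (hs : 2 ≤ s) :
    Real.log s + digamma 3 - digamma (s + 3) > 0 := by
  obtain ⟨n, hn⟩ := exists_nat_ge s
  exact DAux.aux n s hs (by push_cast; linarith)
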